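/- Define κ(z,w) := √π e^{z²+w²} ∫_{−∞}^{0} [f_w(u) f_z'(u) − f_z(u) f_w'(u)] du where f_z(u) := (1/2) erfc(√2(z−u)). Then κ(z,w) = e^{2zw} ∫_{−∞}^{0} e^{−t²} sinh(2t(w−z)) erfc(z+w−t) dt for all complex z, w. -/

import Mathlib

/-- The complementary error function extended to complex arguments. -/
noncomputable def cerfc (z : ℂ) : ℂ :=
  1 - (2 / (Real.sqrt Real.pi : ℂ)) * ∫ t in (0:ℝ)..1, z * Complex.exp (-((t : ℂ) * z) ^ 2)

/-- `f_z(u) = (1/2) erfc(√2 (z - u))`, for real `u`. -/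
noncomputable def fz (z : ℂ) (u : ℝ) : ℂ := (1 / 2) * cerfc ((Real.sqrt 2 : ℂ) * (z - (u : ℂ)))

/-- The edge pre-kernel `κ(z,w) = √π e^{z²+w²} ∫_{-∞}^0 W(f_w, f_z)(u) du`, where
`W(f,g)(u) = f(u) g'(u) - f'(u) g(u)` is the Wronskian in `u`. -/
noncomputable def kappaEdge (z w : ℂ) : ℂ :=
  (Real.sqrt Real.pi : ℂ) * Complex.exp (z ^ 2 + w ^ 2) *
    ∫ u in Set.Iio (0:ℝ), (fz w u * deriv (fz z) u - fz z u * deriv (fz w) u)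

open MeasureTheory Set Filter Metric Complex Topology

lemma cerfc_zero : cerfc 0 = 1 := by simp [cerfc]

lemma hasDerivAt_mulexp (c x : ℂ) :
    HasDerivAt (fun x : ℂ => x * Complex.exp (-(c * x) ^ 2))
      ((1 - 2 * c^2 * x^2) * Complex.exp (-(c * x) ^ 2)) x := by
  have h1 : HasDerivAt (fun x : ℂ => -(c*x)^2) (-(2*c^2*x)) x := by
    have := (((hasDerivAt_id x).const_mul c).pow 2).neg
    refine this.congr_deriv ?_
    simp only [id_eq]
    ring
  have := (hasDerivAt_id x).mul h1.cexp
  refine this.congr_deriv ?_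
  simp only [id_eq]
  ring

lemma hasDerivAt_mulexp' (c x : ℂ) :
    HasDerivAt (fun x : ℂ => x * Complex.exp (-(x * c) ^ 2))
      ((1 - 2 * c^2 * x^2) * Complex.exp (-(x * c) ^ 2)) x := by
  have := hasDerivAt_mulexp c x
  have harg : ∀ y : ℂ, -(y * c) ^ 2 = -(c * y) ^ 2 := fun y => by ring
  simp only [harg]
  exact this

lemma hasDerivAt_cerfc (a : ℂ) :
    HasDerivAt cerfc (-(2 / (Real.sqrt Real.pi : ℂ)) * Complex.exp (-a ^ 2)) a := by
  set R : ℝ := ‖a‖ + 1 with hR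
  have key : HasDerivAt (fun x : ℂ => ∫ t in (0:ℝ)..1, x * Complex.exp (-((t:ℂ) * x) ^ 2))
      (Complex.exp (-a ^ 2)) a := by
    have main := intervalIntegral.hasDerivAt_integral_of_dominated_loc_of_deriv_le
      (F := fun (x : ℂ) (t : ℝ) => x * Complex.exp (-((t:ℂ) * x) ^ 2))
      (F' := fun (x : ℂ) (t : ℝ) => (1 - 2 * (t:ℂ)^2 * x^2) * Complex.exp (-((t:ℂ) * x) ^ 2))
      (x₀ := a) (a := (0:ℝ)) (b := 1) (μ := volume)
      (bound := fun _ => (1 + 2 * R ^ 2) * Real.exp (R ^ 2)) (ball_mem_nhds a one_pos)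
      (Filter.Eventually.of_forall (fun x => (Continuous.aestronglyMeasurable (by fun_prop))))
      ((by fun_prop : Continuous fun t : ℝ => a * Complex.exp (-((t:ℂ) * a) ^ 2)).intervalIntegrable 0 1)
      ((Continuous.aestronglyMeasurable (by fun_prop)))
      ?_ intervalIntegrable_const
      (Filter.Eventually.of_forall (fun t _ x _ => hasDerivAt_mulexp (t:ℂ) x))
    · have ftc : (∫ t in (0:ℝ)..1, (1 - 2*(t:ℂ)^2*a^2) * Complex.exp (-((t:ℂ)*a)^2))
          = Complex.exp (-a^2) := by
        have hder : ∀ t ∈ uIcc (0:ℝ) 1, HasDerivAt (fun t : ℝ => (t:ℂ) * Complex.exp (-((t:ℂ)*a)^2))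
            ((1 - 2*(t:ℂ)^2*a^2) * Complex.exp (-((t:ℂ)*a)^2)) t := by
          intro t _
          have := (hasDerivAt_mulexp' a (t:ℂ)).comp_ofReal
          convert this using 1
          ring
        rw [intervalIntegral.integral_eq_sub_of_hasDerivAt hder
          ((by fun_prop : Continuous fun t : ℝ =>
            (1 - 2*(t:ℂ)^2*a^2) * Complex.exp (-((t:ℂ)*a)^2)).intervalIntegrable 0 1)]
        simp
      rw [ftc] at main
      exact main.2
    · refine Filter.Eventually.of_forall (fun t ht x hx => ?_)
      have hxR : ‖x‖ ≤ R := by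
        have := mem_ball_iff_norm.1 hx
        have h2 := norm_sub_norm_le x a
        rw [hR]; linarith
      have ht' : t ∈ Set.Ioc (0:ℝ) 1 := by simpa [Set.uIoc_of_le (zero_le_one' ℝ)] using ht
      have ht0 : 0 ≤ t := ht'.1.le
      have ht1 : t ≤ 1 := ht'.2
      have htsq : t^2 ≤ 1 := by nlinarith
      rw [norm_mul]
      have hnormexp : ‖Complex.exp (-((t:ℂ)*x)^2)‖ ≤ Real.exp (R^2) := by
        rw [Complex.norm_exp]
        apply Real.exp_le_exp.2
        have hre : (-((t:ℂ)*x)^2).re = -(t^2 * (x^2).re) := by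
          have h0 : (-((t:ℂ)*x)^2) = (((t^2:ℝ)) : ℂ) * (-(x^2)) := by push_cast; ring
          rw [h0, Complex.re_ofReal_mul, Complex.neg_re]; ring
        rw [hre]
        have h1 : |(x^2).re| ≤ ‖x‖^2 := by
          have := Complex.abs_re_le_norm (x^2)
          simpa [norm_pow] using this
        have h2 : ‖x‖^2 ≤ R^2 := by nlinarith [norm_nonneg x, hxR]
        have h3 : -(t^2 * (x^2).re) ≤ t^2 * |(x^2).re| := by
          rw [← mul_neg]
          exact mul_le_mul_of_nonneg_left (neg_le_abs _) (sq_nonneg t)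
        have h4 : t^2 * |(x^2).re| ≤ |(x^2).re| := by
          nlinarith [abs_nonneg ((x^2).re)]
        linarith
      have hnorm1 : ‖(1 : ℂ) - 2 * (t:ℂ)^2 * x^2‖ ≤ 1 + 2 * R^2 := by
        refine (norm_sub_le _ _).trans ?_
        simp only [norm_one, norm_mul, norm_pow]
        have : ‖(2:ℂ)‖ = 2 := by norm_num
        rw [this]
        have hnt : ‖(t:ℂ)‖ = t := by
          rw [Complex.norm_real, Real.norm_eq_abs, _root_.abs_of_nonneg ht0]
        rw [hnt]
        have : t^2 * ‖x‖^2 ≤ R^2 := by nlinarith [norm_nonneg x, hxR, sq_nonneg (‖x‖)]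
        nlinarith
      exact mul_le_mul hnorm1 hnormexp (norm_nonneg _) (by positivity)
  have hc : cerfc = fun x : ℂ =>
      1 - (2 / (Real.sqrt Real.pi : ℂ)) * ∫ t in (0:ℝ)..1, x * Complex.exp (-((t:ℂ) * x) ^ 2) := rfl
  rw [hc]
  have := (key.const_mul (2 / (Real.sqrt Real.pi : ℂ))).const_sub 1
  refine this.congr_deriv ?_
  ring

lemma norm_cexp_quad (b : ℝ) (a : ℂ) (s : ℝ) :
    ‖Complex.exp (-(b:ℂ) * (a + (s:ℂ))^2)‖ = Real.exp (-(b * ((a.re + s)^2 - a.im^2))) := by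
  rw [Complex.norm_exp]
  congr 1
  simp [Complex.mul_re, Complex.mul_im, Complex.add_re, Complex.add_im, pow_two,
    Complex.ofReal_re, Complex.ofReal_im]

lemma gauss_norm_le (b : ℝ) (hb : 0 < b) (a : ℂ) (s : ℝ) :
    ‖Complex.exp (-(b:ℂ) * (a + (s:ℂ))^2)‖ ≤
      Real.exp (b * (a.im^2 + a.re^2)) * Real.exp (-(b/2) * s^2) := by
  rw [norm_cexp_quad, ← Real.exp_add]
  apply Real.exp_le_exp.2
  nlinarith [sq_nonneg (s + 2*a.re), mul_nonneg hb.le (sq_nonneg (s + 2*a.re))]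

lemma gauss_integrableOn (b : ℝ) (hb : 0 < b) (a : ℂ) :
    IntegrableOn (fun s : ℝ => Complex.exp (-(b:ℂ) * (a + (s:ℂ))^2)) (Ioi 0) := by
  refine Integrable.integrableOn (Integrable.mono'
    (((integrable_exp_neg_mul_sq (by positivity : 0 < b/2)).const_mul
      (Real.exp (b * (a.im^2 + a.re^2)))))
    (Continuous.aestronglyMeasurable (by fun_prop))
    (Filter.Eventually.of_forall (fun s => gauss_norm_le b hb a s)))

lemma gauss_tendsto (b : ℝ) (hb : 0 < b) (a : ℂ) :
    Tendsto (fun s : ℝ => Complex.exp (-(b:ℂ) * (a + (s:ℂ))^2)) atTop (𝓝 0) := by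
  apply squeeze_zero_norm (gauss_norm_le b hb a)
  have h1 : Tendsto (fun s : ℝ => Real.exp (-(b/2) * s^2)) atTop (𝓝 0) :=
    Real.tendsto_exp_atBot.comp
      ((tendsto_pow_atTop two_ne_zero).const_mul_atTop_of_neg (by linarith))
  simpa using h1.const_mul (Real.exp (b * (a.im^2 + a.re^2)))

lemma gauss_deriv_bound (b : ℝ) (hb : 0 < b) (a₀ a : ℂ) (ha : a ∈ ball a₀ 1)
    (s : ℝ) (hs : 0 ≤ s) :
    ‖(-2*(b:ℂ)*(a+(s:ℂ))) * Complex.exp (-(b:ℂ)*(a+(s:ℂ))^2)‖ ≤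
      (2*b*Real.exp (2*b*(‖a₀‖+1)^2) * Real.exp ((‖a₀‖+1) + 1/b)) * Real.exp (-(b/4)*s^2) := by
  set R : ℝ := ‖a₀‖ + 1 with hR
  clear_value R
  have hR0 : 0 < R := by rw [hR]; positivity
  have h1 : ‖a‖ ≤ R := by
    have := mem_ball_iff_norm.1 ha
    have h2 := norm_sub_norm_le a a₀
    rw [hR]; linarith
  have h2 : ‖a + (s:ℂ)‖ ≤ R + s := by
    refine (norm_add_le _ _).trans ?_
    have : ‖((s:ℝ):ℂ)‖ = s := by rw [Complex.norm_real, Real.norm_eq_abs, _root_.abs_of_nonneg hs]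
    rw [this]; linarith
  have him : a.im^2 ≤ R^2 := by
    have h3 := Complex.abs_im_le_norm a
    have h4 : |a.im| ≤ R := h3.trans h1
    calc a.im^2 = |a.im|^2 := (_root_.sq_abs _).symm
      _ ≤ R^2 := by nlinarith [abs_nonneg a.im]
  have hre2 : a.re^2 ≤ R^2 := by
    have h3 := Complex.abs_re_le_norm a
    have h4 : |a.re| ≤ R := h3.trans h1
    calc a.re^2 = |a.re|^2 := (_root_.sq_abs _).symm
      _ ≤ R^2 := by nlinarith [abs_nonneg a.re]
  have hexp : ‖Complex.exp (-(b:ℂ)*(a+(s:ℂ))^2)‖ ≤ Real.exp (2*b*R^2 - (b/2)*s^2) := by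
    rw [norm_cexp_quad]
    apply Real.exp_le_exp.2
    nlinarith [mul_nonneg hb.le (sq_nonneg (s + 2*a.re)), mul_le_mul_of_nonneg_left him hb.le,
      mul_le_mul_of_nonneg_left hre2 hb.le]
  have hA : ‖-2*(b:ℂ)*(a+(s:ℂ))‖ ≤ 2*b*(R+s) := by
    rw [show (-2*(b:ℂ)*(a+(s:ℂ))) = ((( -2*b : ℝ)):ℂ) * (a+(s:ℂ)) by push_cast; ring,
      norm_mul, Complex.norm_real, Real.norm_eq_abs]
    have habs : |(-2*b : ℝ)| = 2*b := by
      rw [abs_of_nonpos (by linarith)]; ring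
    rw [habs]
    nlinarith [norm_nonneg (a+(s:ℂ))]
  have hpoly : R + s ≤ Real.exp (R + 1/b + (b/4)*s^2) := by
    have h5 : R + s ≤ Real.exp (R + s) := by
      have := Real.add_one_le_exp (R + s); linarith
    refine h5.trans (Real.exp_le_exp.2 ?_)
    rw [← sub_nonneg]
    have hq : R + 1/b + (b/4)*s^2 - (R+s) = (b*s-2)^2 / (4*b) := by
      field_simp; ring
    rw [hq]; positivity
  rw [norm_mul]
  calc ‖-2*(b:ℂ)*(a+(s:ℂ))‖ * ‖Complex.exp (-(b:ℂ)*(a+(s:ℂ))^2)‖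
      ≤ (2*b*(R+s)) * Real.exp (2*b*R^2 - (b/2)*s^2) :=
        mul_le_mul hA hexp (norm_nonneg _) (by positivity)
    _ ≤ (2*b*Real.exp (2*b*R^2) * Real.exp (R + 1/b)) * Real.exp (-(b/4)*s^2) := by
        have key : (R+s) * Real.exp (2*b*R^2 - (b/2)*s^2) ≤
            Real.exp (R + 1/b + (b/4)*s^2) * Real.exp (2*b*R^2 - (b/2)*s^2) :=
          mul_le_mul_of_nonneg_right hpoly (Real.exp_nonneg _)
        rw [← Real.exp_add] at key
        have e1 : R + 1/b + (b/4)*s^2 + (2*b*R^2 - (b/2)*s^2)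
            = (2*b*R^2) + ((R + 1/b) + (-(b/4)*s^2)) := by ring
        rw [e1, Real.exp_add, Real.exp_add] at key
        nlinarith [Real.exp_nonneg (2*b*R^2 - (b/2)*s^2), Real.exp_nonneg (-(b/4)*s^2), hb]

lemma gauss_deriv_s (b : ℝ) (a : ℂ) (s : ℝ) :
    HasDerivAt (fun s : ℝ => Complex.exp (-(b:ℂ)*(a+(s:ℂ))^2))
      ((-2*(b:ℂ)*(a+(s:ℂ))) * Complex.exp (-(b:ℂ)*(a+(s:ℂ))^2)) s := by
  have hC : HasDerivAt (fun v : ℂ => Complex.exp (-(b:ℂ)*(a+v)^2))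
      ((-2*(b:ℂ)*(a+(s:ℂ))) * Complex.exp (-(b:ℂ)*(a+(s:ℂ))^2)) ((s:ℝ):ℂ) := by
    have h1 : HasDerivAt (fun v : ℂ => -(b:ℂ)*(a+v)^2) (-2*(b:ℂ)*(a+(s:ℂ))) ((s:ℝ):ℂ) := by
      have := (((hasDerivAt_id ((s:ℝ):ℂ)).const_add a).pow 2).const_mul (-(b:ℂ))
      refine this.congr_deriv ?_
      simp only [id_eq]
      ring
    have := h1.cexp
    refine this.congr_deriv ?_
    ring
  exact hC.comp_ofReal

lemma gauss_deriv_a (b : ℝ) (s : ℝ) (a : ℂ) :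
    HasDerivAt (fun a : ℂ => Complex.exp (-(b:ℂ)*(a+(s:ℂ))^2))
      ((-2*(b:ℂ)*(a+(s:ℂ))) * Complex.exp (-(b:ℂ)*(a+(s:ℂ))^2)) a := by
  have h1 : HasDerivAt (fun a : ℂ => -(b:ℂ)*(a+(s:ℂ))^2) (-2*(b:ℂ)*(a+(s:ℂ))) a := by
    have := (((hasDerivAt_id a).add_const ((s:ℝ):ℂ)).pow 2).const_mul (-(b:ℂ))
    refine this.congr_deriv ?_
    simp only [id_eq]
    ring
  have := h1.cexp
  refine this.congr_deriv ?_
  ring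

lemma gauss_deriv_integrableOn (b : ℝ) (hb : 0 < b) (a : ℂ) :
    IntegrableOn (fun s : ℝ => (-2*(b:ℂ)*(a+(s:ℂ))) * Complex.exp (-(b:ℂ)*(a+(s:ℂ))^2))
      (Ioi 0) := by
  set K : ℝ := 2*b*Real.exp (2*b*(‖a‖+1)^2) * Real.exp ((‖a‖+1) + 1/b) with hK
  refine Integrable.mono'
    (((integrable_exp_neg_mul_sq (by positivity : (0:ℝ) < b/4)).const_mul K).integrableOn)
    ((Continuous.aestronglyMeasurable (by fun_prop)).restrict) ?_
  rw [ae_restrict_iff' measurableSet_Ioi]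
  exact Filter.Eventually.of_forall
    (fun s hs => gauss_deriv_bound b hb a a (mem_ball_self one_pos) s (le_of_lt hs))

lemma gauss_J_hasDerivAt (b : ℝ) (hb : 0 < b) (a₀ : ℂ) :
    HasDerivAt (fun a : ℂ => ∫ s in Ioi (0:ℝ), Complex.exp (-(b:ℂ)*(a+(s:ℂ))^2))
      (-Complex.exp (-(b:ℂ)*a₀^2)) a₀ := by
  set K : ℝ := 2*b*Real.exp (2*b*(‖a₀‖+1)^2) * Real.exp ((‖a₀‖+1) + 1/b) with hK
  have main := hasDerivAt_integral_of_dominated_loc_of_deriv_le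
    (F := fun (a : ℂ) (s : ℝ) => Complex.exp (-(b:ℂ)*(a+(s:ℂ))^2))
    (F' := fun (a : ℂ) (s : ℝ) => (-2*(b:ℂ)*(a+(s:ℂ))) * Complex.exp (-(b:ℂ)*(a+(s:ℂ))^2))
    (x₀ := a₀) (μ := volume.restrict (Ioi 0))
    (bound := fun s => K * Real.exp (-(b/4)*s^2)) (ball_mem_nhds a₀ one_pos)
    (Filter.Eventually.of_forall (fun a => (Continuous.aestronglyMeasurable (by fun_prop))))
    (gauss_integrableOn b hb a₀)
    (Continuous.aestronglyMeasurable (by fun_prop))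
    ?_ (((integrable_exp_neg_mul_sq (by positivity : (0:ℝ) < b/4)).const_mul K).integrableOn)
    (Filter.Eventually.of_forall (fun s a _ => gauss_deriv_a b s a))
  · have hval : (∫ s in Ioi (0:ℝ), (-2*(b:ℂ)*(a₀+(s:ℂ))) * Complex.exp (-(b:ℂ)*(a₀+(s:ℂ))^2))
        = -Complex.exp (-(b:ℂ)*a₀^2) := by
      have := integral_Ioi_of_hasDerivAt_of_tendsto'
        (f := fun s : ℝ => Complex.exp (-(b:ℂ)*(a₀+(s:ℂ))^2))
        (f' := fun s : ℝ => (-2*(b:ℂ)*(a₀+(s:ℂ))) * Complex.exp (-(b:ℂ)*(a₀+(s:ℂ))^2))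
        (a := 0) (m := 0)
        (fun x _ => gauss_deriv_s b a₀ x)
        (gauss_deriv_integrableOn b hb a₀)
        (gauss_tendsto b hb a₀)
      rw [this]
      push_cast
      simp
    rw [hval] at main
    exact main.2
  · rw [ae_restrict_iff' measurableSet_Ioi]
    exact Filter.Eventually.of_forall
      (fun s hs a ha => gauss_deriv_bound b hb a₀ a ha s (le_of_lt hs))

lemma eq_of_hasDerivAt_zero {f : ℂ → ℂ} (h : ∀ x, HasDerivAt f 0 x) (a : ℂ) : f a = f 0 := by
  have hdiff : Differentiable ℝ f := fun x =>
    ((h x).differentiableAt.restrictScalars ℝ)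
  have hzero : ∀ x, fderiv ℝ f x = 0 := by
    intro x
    have h2 : (ContinuousLinearMap.toSpanSingleton ℂ (0:ℂ)) = 0 := by
      ext; simp
    have h1 : HasFDerivAt f ((0 : ℂ →L[ℂ] ℂ).restrictScalars ℝ) x := by
      have := (h x).hasFDerivAt
      rw [h2] at this
      exact this.restrictScalars ℝ
    have h3 : ((0 : ℂ →L[ℂ] ℂ).restrictScalars ℝ) = (0 : ℂ →L[ℝ] ℂ) := by
      ext; simp
    rw [h3] at h1
    exact h1.fderiv
  exact is_const_of_fderiv_eq_zero (𝕜 := ℝ) hdiff hzero a 0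

lemma sq_sqrt_c {b : ℝ} (hb : 0 ≤ b) : ((Real.sqrt b : ℝ) : ℂ)^2 = (b:ℂ) := by
  rw [← Complex.ofReal_pow, Real.sq_sqrt hb]

lemma gauss_Ioi (b : ℝ) (hb : 0 < b) (a : ℂ) :
    ∫ s in Ioi (0:ℝ), Complex.exp (-(b:ℂ) * (a + (s:ℂ))^2)
      = ((Real.sqrt Real.pi / (2 * Real.sqrt b) : ℝ) : ℂ) * cerfc ((Real.sqrt b : ℂ) * a) := by
  have hsb : (0:ℝ) < Real.sqrt b := Real.sqrt_pos.2 hb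
  have hsp : (0:ℝ) < Real.sqrt Real.pi := Real.sqrt_pos.2 Real.pi_pos
  set C : ℂ := ((Real.sqrt Real.pi / (2 * Real.sqrt b) : ℝ) : ℂ) with hC
  set G : ℂ → ℂ := fun a =>
    (∫ s in Ioi (0:ℝ), Complex.exp (-(b:ℂ) * (a + (s:ℂ))^2))
      - C * cerfc ((Real.sqrt b : ℂ) * a) with hG
  have hGd : ∀ x : ℂ, HasDerivAt G 0 x := by
    intro x
    have h1 := gauss_J_hasDerivAt b hb x
    have h2 : HasDerivAt (fun a : ℂ => C * cerfc ((Real.sqrt b : ℂ) * a))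
        (-Complex.exp (-(b:ℂ)*x^2)) x := by
      have hc := hasDerivAt_cerfc ((Real.sqrt b : ℂ) * x)
      have hin : HasDerivAt (fun a : ℂ => (Real.sqrt b : ℂ) * a) ((Real.sqrt b : ℂ)) x := by
        simpa using (hasDerivAt_id x).const_mul ((Real.sqrt b : ℝ) : ℂ)
      have := (hc.comp x hin).const_mul C
      refine this.congr_deriv ?_
      have harg : -((Real.sqrt b : ℂ) * x)^2 = -(b:ℂ)*x^2 := by
        rw [mul_pow, sq_sqrt_c hb.le]; ring
      rw [harg, hC]
      have h2p : ((Real.sqrt Real.pi :ℝ):ℂ) ≠ 0 := by exact_mod_cast hsp.ne'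
      have h2b : ((Real.sqrt b :ℝ):ℂ) ≠ 0 := by exact_mod_cast hsb.ne'
      push_cast
      field_simp
    have h3 := h1.sub h2; rw [sub_self] at h3; exact h3
  have hconst := eq_of_hasDerivAt_zero hGd a
  have hG0 : G 0 = 0 := by
    rw [hG]
    simp only [mul_zero, cerfc_zero, mul_one, add_zero]
    have : (∫ s in Ioi (0:ℝ), Complex.exp (-(b:ℂ) * ((0:ℂ) + (s:ℂ))^2))
        = ((Real.sqrt (Real.pi / b) / 2 : ℝ) : ℂ) := by
      have hptw : ∀ s : ℝ, Complex.exp (-(b:ℂ) * ((0:ℂ) + (s:ℂ))^2)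
          = ((Real.exp (-b * s^2) : ℝ) : ℂ) := by
        intro s
        rw [Complex.ofReal_exp]
        congr 1
        push_cast
        ring
      simp_rw [hptw]
      have hcast : ∫ s in Ioi (0:ℝ), ((Real.exp (-b*s^2) : ℝ) : ℂ)
          = ((∫ s in Ioi (0:ℝ), Real.exp (-b*s^2) : ℝ) : ℂ) := integral_ofReal
      rw [hcast, integral_gaussian_Ioi b]
    rw [this, hC, sub_eq_zero]
    norm_cast
    rw [Real.sqrt_div Real.pi_pos.le b, div_div, mul_comm]
  have : G a = 0 := hconst.trans hG0
  rw [hG] at this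
  have := sub_eq_zero.1 this
  simpa [hC] using this

lemma two_sqrt_c : ((Real.sqrt 2 : ℝ) : ℂ)^2 = 2 := by
  rw [sq_sqrt_c (by norm_num : (0:ℝ) ≤ 2)]; norm_num

lemma hasDerivAt_fz (z : ℂ) (u : ℝ) :
    HasDerivAt (fz z)
      (((Real.sqrt 2 / Real.sqrt Real.pi : ℝ) : ℂ) * Complex.exp (-2*(z-(u:ℂ))^2)) u := by
  have hsp : (0:ℝ) < Real.sqrt Real.pi := Real.sqrt_pos.2 Real.pi_pos
  have hs2 : (0:ℝ) < Real.sqrt 2 := Real.sqrt_pos.2 (by norm_num)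
  have hF : HasDerivAt (fun v : ℂ => (1/2 : ℂ) * cerfc ((Real.sqrt 2 : ℂ) * (z - v)))
      (((Real.sqrt 2 / Real.sqrt Real.pi : ℝ) : ℂ) * Complex.exp (-2*(z-(u:ℂ))^2)) ((u:ℝ):ℂ) := by
    have hin : HasDerivAt (fun v : ℂ => (Real.sqrt 2 : ℂ) * (z - v))
        (-((Real.sqrt 2 : ℝ):ℂ)) ((u:ℝ):ℂ) := by
      have := ((hasDerivAt_id ((u:ℝ):ℂ)).const_sub z).const_mul ((Real.sqrt 2 : ℝ) : ℂ)
      refine this.congr_deriv ?_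
      ring
    have hc := hasDerivAt_cerfc ((Real.sqrt 2 : ℂ) * (z - ((u:ℝ):ℂ)))
    have := (hc.comp ((u:ℝ):ℂ) hin).const_mul (1/2 : ℂ)
    refine this.congr_deriv ?_
    have harg : -((Real.sqrt 2 : ℂ) * (z - ((u:ℝ):ℂ)))^2 = -2*(z-((u:ℝ):ℂ))^2 := by
      rw [mul_pow, two_sqrt_c]; ring
    rw [harg]
    have h2p : ((Real.sqrt Real.pi :ℝ):ℂ) ≠ 0 := by exact_mod_cast hsp.ne'
    push_cast
    field_simp
  exact hF.comp_ofReal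

lemma fz_eq (z : ℂ) (u : ℝ) :
    fz z u = ((Real.sqrt 2 / Real.sqrt Real.pi : ℝ) : ℂ) *
      ∫ s in Ioi (0:ℝ), Complex.exp (-((2:ℝ):ℂ) * ((z - (u:ℂ)) + (s:ℂ))^2) := by
  rw [gauss_Ioi 2 (by norm_num) (z - (u:ℂ))]
  have hsp : (0:ℝ) < Real.sqrt Real.pi := Real.sqrt_pos.2 Real.pi_pos
  have hs2 : (0:ℝ) < Real.sqrt 2 := Real.sqrt_pos.2 (by norm_num)
  have h2p : ((Real.sqrt Real.pi :ℝ):ℂ) ≠ 0 := by exact_mod_cast hsp.ne'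
  have h2b : ((Real.sqrt 2 :ℝ):ℂ) ≠ 0 := by exact_mod_cast hs2.ne'
  rw [fz]
  push_cast
  field_simp

lemma integral_Iio_comp_neg (f : ℝ → ℂ) :
    ∫ u in Iio (0:ℝ), f u = ∫ x in Ioi (0:ℝ), f (-x) := by
  have h := integral_comp_neg_Ioi (0:ℝ) f
  rw [neg_zero, integral_Iic_eq_integral_Iio] at h
  exact h.symm

lemma integral_Ioi_comp_neg (f : ℝ → ℂ) :
    ∫ s in Ioi (0:ℝ), f s = ∫ t in Iio (0:ℝ), f (-t) := by
  have h := integral_comp_neg_Iic (0:ℝ) f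
  rw [neg_zero, integral_Iic_eq_integral_Iio] at h
  exact h.symm

lemma gauss4_Iio (A : ℂ) :
    ∫ u in Iio (0:ℝ), Complex.exp (-(A - 2*(u:ℂ))^2)
      = ((Real.sqrt Real.pi / 4 : ℝ) : ℂ) * cerfc A := by
  rw [integral_Iio_comp_neg (fun u => Complex.exp (-(A - 2*(u:ℂ))^2))]
  have hptw : ∀ x : ℝ, x ∈ Ioi (0:ℝ) → Complex.exp (-(A - 2*((-x : ℝ):ℂ))^2)
      = Complex.exp (-((4:ℝ):ℂ) * ((A/2) + (x:ℂ))^2) := by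
    intro x _; congr 1; push_cast; ring
  rw [setIntegral_congr_fun measurableSet_Ioi hptw]
  rw [gauss_Ioi 4 (by norm_num) (A/2)]
  have h4 : Real.sqrt 4 = 2 := by
    rw [show (4:ℝ) = 2^2 by norm_num, Real.sqrt_sq (by norm_num : (0:ℝ) ≤ 2)]
  rw [h4]
  have : (((2:ℝ)) : ℂ) * (A/2) = A := by push_cast; ring
  rw [this]
  norm_num

lemma norm_exp_neg_sq (A : ℂ) (r : ℝ) :
    ‖Complex.exp (-(A + (r:ℂ))^2)‖ = Real.exp (-((A.re + r)^2 - A.im^2)) := by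
  rw [Complex.norm_exp]
  congr 1
  simp [pow_two, Complex.mul_re, Complex.add_re, Complex.add_im,
    Complex.ofReal_re, Complex.ofReal_im]

lemma fubini_integrable (z w : ℂ) :
    Integrable (Function.uncurry fun (u s : ℝ) =>
      Complex.exp (-(z+w+(s:ℂ)-2*(u:ℂ))^2) *
        (Complex.exp (-(w-z+(s:ℂ))^2) - Complex.exp (-(z-w+(s:ℂ))^2)))
      ((volume.restrict (Iio (0:ℝ))).prod (volume.restrict (Ioi (0:ℝ)))) := by
  set C : ℝ := Real.exp ((z+w).im^2+(z+w).re^2) *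
    (Real.exp ((w-z).im^2+(w-z).re^2) + Real.exp ((z-w).im^2+(z-w).re^2)) with hC
  have hbInt : Integrable (fun p : ℝ × ℝ =>
      (C * Real.exp (-(1/2 : ℝ)*p.1^2)) * Real.exp (-(1/2 : ℝ)*p.2^2))
      ((volume.restrict (Iio (0:ℝ))).prod (volume.restrict (Ioi (0:ℝ)))) := by
    exact Integrable.mul_prod
      (((integrable_exp_neg_mul_sq (by norm_num : (0:ℝ) < 1/2)).const_mul C).restrict)
      ((integrable_exp_neg_mul_sq (by norm_num : (0:ℝ) < 1/2)).restrict)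
  refine Integrable.mono' hbInt (Continuous.aestronglyMeasurable (by fun_prop)) ?_
  rw [Measure.prod_restrict, ae_restrict_iff' (measurableSet_Iio.prod measurableSet_Ioi)]
  refine Filter.Eventually.of_forall (fun p hp => ?_)
  obtain ⟨hu, hs⟩ := hp
  simp only [mem_Iio, mem_Ioi] at hu hs
  obtain ⟨u, s⟩ := p
  simp only [Function.uncurry, norm_mul]
  have h1 : ‖Complex.exp (-(z+w+(s:ℂ)-2*(u:ℂ))^2)‖ ≤
      Real.exp ((z+w).im^2+(z+w).re^2) *
        (Real.exp (-(1/2 : ℝ)*u^2) * Real.exp (-(1/2 : ℝ)*s^2)) := by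
    have harg : (-(z+w+(s:ℂ)-2*(u:ℂ))^2) = -((z+w) + ((s - 2*u : ℝ):ℂ))^2 := by
      push_cast; ring
    rw [harg, norm_exp_neg_sq, ← Real.exp_add, ← Real.exp_add]
    apply Real.exp_le_exp.2
    have key : ((z+w).re + (s - 2*u))^2 ≥ (1/2)*s^2 + (1/2)*u^2 - (z+w).re^2 := by
      nlinarith [sq_nonneg (s - 2*u + 2*(z+w).re), mul_nonneg hs.le (neg_nonneg.2 hu.le),
        sq_nonneg u, sq_nonneg s]
    nlinarith [key]
  have h2 : ‖Complex.exp (-(w-z+(s:ℂ))^2) - Complex.exp (-(z-w+(s:ℂ))^2)‖ ≤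
      Real.exp ((w-z).im^2+(w-z).re^2) + Real.exp ((z-w).im^2+(z-w).re^2) := by
    refine (norm_sub_le _ _).trans ?_
    have e1 : ‖Complex.exp (-(w-z+(s:ℂ))^2)‖ ≤ Real.exp ((w-z).im^2+(w-z).re^2) := by
      rw [norm_exp_neg_sq]
      apply Real.exp_le_exp.2
      nlinarith [sq_nonneg ((w-z).re + s)]
    have e2 : ‖Complex.exp (-(z-w+(s:ℂ))^2)‖ ≤ Real.exp ((z-w).im^2+(z-w).re^2) := by
      rw [norm_exp_neg_sq]
      apply Real.exp_le_exp.2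
      nlinarith [sq_nonneg ((z-w).re + s)]
    linarith
  calc ‖Complex.exp (-(z+w+(s:ℂ)-2*(u:ℂ))^2)‖ *
        ‖Complex.exp (-(w-z+(s:ℂ))^2) - Complex.exp (-(z-w+(s:ℂ))^2)‖
      ≤ (Real.exp ((z+w).im^2+(z+w).re^2) *
          (Real.exp (-(1/2 : ℝ)*u^2) * Real.exp (-(1/2 : ℝ)*s^2))) *
        (Real.exp ((w-z).im^2+(w-z).re^2) + Real.exp ((z-w).im^2+(z-w).re^2)) :=
        mul_le_mul h1 h2 (norm_nonneg _) (by positivity)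
    _ = (C * Real.exp (-(1/2 : ℝ)*u^2)) * Real.exp (-(1/2 : ℝ)*s^2) := by
        rw [hC]; ring

theorem stmt9 (z w : ℂ) :
    kappaEdge z w = Complex.exp (2 * z * w) *
      ∫ t in Set.Iio (0:ℝ),
        Complex.exp (-(t : ℂ) ^ 2) * Complex.sinh (2 * (t : ℂ) * (w - z)) *
          cerfc (z + w - (t : ℂ)) := by
  have hpi : (0:ℝ) < Real.pi := Real.pi_pos
  set c : ℂ := ((Real.sqrt 2 / Real.sqrt Real.pi : ℝ) : ℂ) with hc
  -- Step 1: pointwise identity for the Wronskian integrand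
  have hstep1 : ∀ u : ℝ, u ∈ Iio (0:ℝ) →
      fz w u * deriv (fz z) u - fz z u * deriv (fz w) u
        = c^2 * ∫ s in Ioi (0:ℝ), Complex.exp (-(z+w+(s:ℂ)-2*(u:ℂ))^2) *
            (Complex.exp (-(w-z+(s:ℂ))^2) - Complex.exp (-(z-w+(s:ℂ))^2)) := by
    intro u _
    rw [(hasDerivAt_fz z u).deriv, (hasDerivAt_fz w u).deriv, fz_eq w u, fz_eq z u]
    rw [show ∀ (X Y Gz Gw : ℂ), (c * X) * (c * Gz) - (c * Y) * (c * Gw)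
        = c^2 * (X * Gz - Y * Gw) from fun _ _ _ _ => by ring]
    congr 1
    rw [← integral_mul_const, ← integral_mul_const]
    rw [← integral_sub
      ((gauss_integrableOn 2 (by norm_num) (w - (u:ℂ))).mul_const _)
      ((gauss_integrableOn 2 (by norm_num) (z - (u:ℂ))).mul_const _)]
    refine setIntegral_congr_fun measurableSet_Ioi (fun s _ => ?_)
    rw [mul_sub]
    congr 1
    · rw [← Complex.exp_add, ← Complex.exp_add]
      congr 1
      push_cast
      ring
    · rw [← Complex.exp_add, ← Complex.exp_add]
      congr 1
      push_cast
      ring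
  rw [kappaEdge, setIntegral_congr_fun measurableSet_Iio hstep1, integral_const_mul]
  rw [integral_integral_swap (fubini_integrable z w)]
  -- compute inner u-integral
  have hstep2 : ∀ s : ℝ, s ∈ Ioi (0:ℝ) →
      (∫ u in Iio (0:ℝ), Complex.exp (-(z+w+(s:ℂ)-2*(u:ℂ))^2) *
        (Complex.exp (-(w-z+(s:ℂ))^2) - Complex.exp (-(z-w+(s:ℂ))^2)))
      = ((Real.sqrt Real.pi / 4 : ℝ) : ℂ) * cerfc (z+w+(s:ℂ)) *
          (Complex.exp (-(w-z+(s:ℂ))^2) - Complex.exp (-(z-w+(s:ℂ))^2)) := by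
    intro s _
    rw [integral_mul_const, gauss4_Iio (z+w+(s:ℂ))]
  rw [setIntegral_congr_fun measurableSet_Ioi hstep2]
  rw [integral_Ioi_comp_neg (fun s => ((Real.sqrt Real.pi / 4 : ℝ) : ℂ) * cerfc (z+w+(s:ℂ)) *
    (Complex.exp (-(w-z+(s:ℂ))^2) - Complex.exp (-(z-w+(s:ℂ))^2)))]
  rw [show Complex.exp (2*z*w) * ∫ t in Iio (0:ℝ),
        Complex.exp (-(t : ℂ)^2) * Complex.sinh (2 * (t:ℂ) * (w - z)) * cerfc (z + w - (t:ℂ))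
      = ∫ t in Iio (0:ℝ), Complex.exp (2*z*w) *
        (Complex.exp (-(t : ℂ)^2) * Complex.sinh (2 * (t:ℂ) * (w - z)) * cerfc (z + w - (t:ℂ)))
      from (integral_const_mul _ _).symm]
  rw [← integral_const_mul (c^2), ← integral_const_mul ((Real.sqrt Real.pi : ℂ) * Complex.exp (z^2+w^2))]
  refine setIntegral_congr_fun measurableSet_Iio (fun t _ => ?_)
  -- pointwise final identity
  have hpi : (0:ℝ) < Real.pi := Real.pi_pos
  push_cast
  rw [show Complex.sinh (2 * (t:ℂ) * (w - z)) = (Complex.exp (2 * (t:ℂ) * (w - z)) - Complex.exp (-(2 * (t:ℂ) * (w - z)))) / 2 from rfl]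
  rw [show z + w + -(t:ℂ) = z + w - (t:ℂ) from by ring]
  have h1 : Complex.exp (z^2+w^2) * Complex.exp (-(w-z+ -(t:ℂ))^2)
      = Complex.exp (2*z*w) * (Complex.exp (-(t:ℂ)^2) * Complex.exp (2*(t:ℂ)*(w-z))) := by
    rw [← Complex.exp_add, ← Complex.exp_add, ← Complex.exp_add]; congr 1; ring
  have h2 : Complex.exp (z^2+w^2) * Complex.exp (-(z-w+ -(t:ℂ))^2)
      = Complex.exp (2*z*w) * (Complex.exp (-(t:ℂ)^2) * Complex.exp (-(2*(t:ℂ)*(w-z)))) := by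
    rw [← Complex.exp_add, ← Complex.exp_add, ← Complex.exp_add]; congr 1; ring
  have hcc : (Real.sqrt Real.pi : ℂ) * c^2 * ((Real.sqrt Real.pi : ℂ) / 4) = 1/2 := by
    have hreal : Real.sqrt Real.pi * ((Real.sqrt 2 / Real.sqrt Real.pi)^2) *
        (Real.sqrt Real.pi / 4) = 1/2 := by
      have hh1 : Real.sqrt Real.pi ^2 = Real.pi := Real.sq_sqrt hpi.le
      have hh2 : Real.sqrt 2 ^2 = 2 := Real.sq_sqrt (by norm_num)
      have hh3 : Real.sqrt Real.pi ≠ 0 := (Real.sqrt_pos.2 hpi).ne'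
      field_simp
      nlinarith [hh1, hh2]
    rw [hc]
    have : ((Real.sqrt Real.pi : ℝ):ℂ) * (((Real.sqrt 2 / Real.sqrt Real.pi : ℝ):ℂ))^2 *
        (((Real.sqrt Real.pi : ℝ):ℂ) / 4)
        = (((Real.sqrt Real.pi * ((Real.sqrt 2 / Real.sqrt Real.pi)^2) *
            (Real.sqrt Real.pi / 4)) : ℝ) : ℂ) := by push_cast; ring
    rw [this, hreal]
    norm_num
  set CF := cerfc (z + w - (t:ℂ)) with hCF
  set K := Complex.exp (2*z*w) * Complex.exp (-(t:ℂ)^2) with hK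
  linear_combination ((Real.sqrt Real.pi : ℂ) * c^2 * ((Real.sqrt Real.pi : ℂ) / 4) * CF) * h1
    - ((Real.sqrt Real.pi : ℂ) * c^2 * ((Real.sqrt Real.pi : ℂ) / 4) * CF) * h2
    + (CF * K * (Complex.exp (2*(t:ℂ)*(w-z)) - Complex.exp (-(2*(t:ℂ)*(w-z))))) * hcc
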